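/- arXiv:2502.10152 — 4 statements merged into one kernel-verified Lean document; each statement's English description precedes it below -/
import Mathlib

section
/- The bipyramid configuration 1:3:1 for $n=5$, consisting of the north and south poles together with three equidistributed points on the equator (Gram matrix with blocks: $X_{12} = -1$, $X_{ij} = -1/2$ for $3 \le i < j \le 5$, and $X_{ij} = 0$ between the two groups), satisfies the polynomial system for critical configurations of the logarithmic Fekete problem with $5$ points. -/
open Finset Matrix

/-- The polynomial system for critical configurations of the logarithmic Fekete
problem with `n` points, in the Gram matrix variables `X i j`. -/
def FeketeSystem (n : ℕ) (X : Matrix (Fin n) (Fin n) ℝ) : Prop :=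
  X.IsSymm ∧ (∀ i, X i i = 1) ∧ (∀ i j, i ≠ j → X i j ≠ 1) ∧
  (∀ j, 1 + ∑ k ∈ Finset.univ.erase j, X j k = 0) ∧
  (∀ i k, k ≠ i →
    ∑ j ∈ Finset.univ.erase k, (X i k - X i j) / (1 - X k j) = ((n : ℝ) - 1) * X i k)

set_option maxHeartbeats 2000000 in
theorem bipyramid_is_critical :
    FeketeSystem 5 !![1, -1, 0, 0, 0;
                      -1, 1, 0, 0, 0;
                      0, 0, 1, -1/2, -1/2;
                      0, 0, -1/2, 1, -1/2;
                      0, 0, -1/2, -1/2, 1] := by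
  refine ⟨?_, ?_, ?_, ?_, ?_⟩
  · ext i j; fin_cases i <;> fin_cases j <;> norm_num [Matrix.transpose]
  · intro i; fin_cases i <;> norm_num
  · intro i j h; fin_cases i <;> fin_cases j <;> first | exact absurd rfl h | norm_num [Matrix.vecHead, Matrix.vecTail]
  · intro j
    rw [Finset.sum_erase_eq_sub (Finset.mem_univ j), Fin.sum_univ_five]
    fin_cases j <;> norm_num [Matrix.cons_val_succ', Matrix.cons_val_zero, Matrix.cons_val_two, Matrix.cons_val_three, Matrix.cons_val_four]
  · intro i k h
    rw [Finset.sum_erase_eq_sub (Finset.mem_univ k), Fin.sum_univ_five]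
    fin_cases i <;> fin_cases k <;> first | exact absurd rfl h | norm_num [Matrix.vecHead, Matrix.vecTail, Matrix.cons_val_succ', Matrix.cons_val_zero, Matrix.cons_val_two, Matrix.cons_val_three, Matrix.cons_val_four]
end

section
/- For $n$ equidistributed points on the unit circle in the plane (the $n$-gon), i.e., $w_k = (\cos(2\pi k/n), \sin(2\pi k/n))$ for $k = 0,\dots,n-1$, the critical configuration equations $\frac{n-1}{2} w_k = \sum_{j\neq k} \frac{w_k - w_j}{\|w_k - w_j\|^2}$ hold for all $k$. -/
open Finset Real

lemma cos_sin_mod_lem (n m : ℕ) (hn : 0 < n) :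
    Real.cos (2*π*((m % n : ℕ):ℝ)/n) = Real.cos (2*π*m/n) ∧
    Real.sin (2*π*((m % n : ℕ):ℝ)/n) = Real.sin (2*π*m/n) := by
  have hn' : (n:ℝ) ≠ 0 := by positivity
  have h : (m:ℝ) = ((m % n : ℕ):ℝ) + ((m / n : ℕ):ℝ) * n := by
    have h0 := Nat.mod_add_div m n
    calc (m:ℝ) = ((m % n + n * (m / n) : ℕ) : ℝ) := by rw [h0]
    _ = _ := by push_cast; ring
  have h2 : 2*π*(m:ℝ)/n = 2*π*((m % n : ℕ):ℝ)/n + (m / n : ℕ) * (2*π) := by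
    rw [h]; field_simp
  rw [h2, Real.cos_add_nat_mul_two_pi, Real.sin_add_nat_mul_two_pi]
  exact ⟨rfl, rfl⟩

theorem ngon_is_critical (n : ℕ) (hn : 2 ≤ n)
    (w : Fin n → EuclideanSpace ℝ (Fin 2))
    (hw : ∀ k : Fin n, w k = (WithLp.equiv 2 (Fin 2 → ℝ)).symm
      ![Real.cos (2 * π * k / n), Real.sin (2 * π * k / n)]) :
    ∀ k, (((n : ℝ) - 1) / 2) • w k =
      ∑ j ∈ Finset.univ.erase k, (‖w k - w j‖ ^ 2)⁻¹ • (w k - w j) := by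
  intro k
  haveI : NeZero n := ⟨by omega⟩
  have hn' : (n:ℝ) ≠ 0 := by positivity
  have hπ := Real.pi_pos
  set θ : Fin n → ℝ := fun j => 2 * π * j / n with hθ
  -- denominator is nonzero for j ≠ k
  have hDne : ∀ j : Fin n, j ≠ k → Real.cos (θ k - θ j) ≠ 1 := by
    intro j hjk h
    rw [Real.cos_eq_one_iff] at h
    obtain ⟨m, hm⟩ := h
    simp only [hθ] at hm
    have hh : (m:ℝ) * n = (k.val:ℝ) - (j.val:ℝ) := by
      field_simp at hm
      nlinarith [hm, Real.pi_pos]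
    have hz : ((k.val:ℤ) - j.val) = 0 := by
      have hR : ((k.val:ℝ) - j.val) = (n:ℝ) * m := by linarith [hh]
      have hZ : ((k.val:ℤ) - j.val) = (n:ℤ) * m := by exact_mod_cast hR
      have hdvd : (n:ℤ) ∣ ((k.val:ℤ) - j.val) := ⟨m, hZ⟩
      refine Int.eq_zero_of_abs_lt_dvd hdvd ?_
      have := k.2; have := j.2
      rw [abs_lt]; constructor <;> omega
    exact hjk (Fin.ext (by omega))
  have hD0 : ∀ j : Fin n, j ≠ k → (2 - 2 * Real.cos (θ k - θ j)) ≠ 0 := by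
    intro j hjk h
    exact hDne j hjk (by linarith)
  -- reflection lemma
  have key : ∀ j : Fin n, Real.cos (θ (k + (k - j))) = Real.cos (2*θ k - θ j) ∧
      Real.sin (θ (k + (k - j))) = Real.sin (2*θ k - θ j) := by
    intro j
    have hv : (k + (k - j)).val = (2 * k.val + (n - j.val)) % n := by
      rw [Fin.add_def, Fin.sub_def]
      simp only [Nat.add_mod_mod]
      congr 1
      omega
    have hjn : j.val ≤ n := j.2.le
    have harg : 2*π*(((2 * k.val + (n - j.val)) : ℕ):ℝ)/n = (2*θ k - θ j) + 2*π := by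
      push_cast [Nat.cast_sub hjn]
      simp only [hθ]
      field_simp
      ring
    have h1 := cos_sin_mod_lem n (2 * k.val + (n - j.val)) (by omega)
    constructor
    · rw [show θ (k + (k - j)) = 2*π*(((k + (k - j)).val : ℕ):ℝ)/n from rfl, hv, h1.1, harg,
        Real.cos_add_two_pi]
    · rw [show θ (k + (k - j)) = 2*π*(((k + (k - j)).val : ℕ):ℝ)/n from rfl, hv, h1.2, harg,
        Real.sin_add_two_pi]
  -- trig of differences with reflected point
  have hcR : ∀ j : Fin n, Real.cos (θ k - θ (k + (k - j))) = Real.cos (θ k - θ j) := by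
    intro j
    rw [Real.cos_sub, (key j).1, (key j).2]
    calc Real.cos (θ k) * Real.cos (2*θ k - θ j) + Real.sin (θ k) * Real.sin (2*θ k - θ j)
        = Real.cos (θ k - (2*θ k - θ j)) := (Real.cos_sub _ _).symm
      _ = _ := by rw [show θ k - (2*θ k - θ j) = -(θ k - θ j) by ring, Real.cos_neg]
  have hsR : ∀ j : Fin n, Real.sin (θ k - θ (k + (k - j))) = -Real.sin (θ k - θ j) := by
    intro j
    rw [Real.sin_sub, (key j).1, (key j).2]
    calc Real.sin (θ k) * Real.cos (2*θ k - θ j) - Real.cos (θ k) * Real.sin (2*θ k - θ j)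
        = Real.sin (θ k - (2*θ k - θ j)) := (Real.sin_sub _ _).symm
      _ = _ := by rw [show θ k - (2*θ k - θ j) = -(θ k - θ j) by ring, Real.sin_neg]
  -- the antisymmetric sum vanishes
  set f : Fin n → ℝ := fun j => Real.sin (θ k - θ j) * (2 - 2 * Real.cos (θ k - θ j))⁻¹ with hf
  have hpair : ∀ j : Fin n, f (k + (k - j)) = - f j := by
    intro j
    simp only [hf, hcR j, hsR j, neg_mul]
  have hS : ∑ j ∈ Finset.univ.erase k, f j = 0 := by
    refine Finset.sum_involution (fun j _ => k + (k - j)) ?_ ?_ ?_ ?_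
    · intro j hj; rw [hpair j]; ring
    · intro j hj hfj heq
      have h2 := hpair j
      rw [heq] at h2
      exact hfj (by linarith)
    · intro j hj
      rw [Finset.mem_erase] at hj ⊢
      refine ⟨?_, Finset.mem_univ _⟩
      intro h
      have h2 : k - j = 0 := by
        have := add_eq_left.mp h
        exact this
      exact hj.1 (sub_eq_zero.mp h2).symm
    · intro j hj
      abel
  -- squared norms
  have hnorm : ∀ j : Fin n, ‖w k - w j‖^2 = 2 - 2 * Real.cos (θ k - θ j) := by
    intro j
    rw [hw k, hw j]
    rw [EuclideanSpace.norm_eq]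
    rw [Real.sq_sqrt (by positivity)]
    simp only [WithLp.equiv_symm_apply, WithLp.ofLp_sub, WithLp.ofLp_toLp, Fin.sum_univ_two,
      Pi.sub_apply, Matrix.cons_val_zero, Matrix.cons_val_one, Matrix.head_cons,
      Real.norm_eq_abs, sq_abs]
    rw [Real.cos_sub]
    nlinarith [Real.sin_sq_add_cos_sq (θ k), Real.sin_sq_add_cos_sq (θ j)]
  have hcard : (Finset.univ.erase k).card = n - 1 := by
    rw [Finset.card_erase_of_mem (Finset.mem_univ k), Finset.card_univ, Fintype.card_fin]
  -- expansions of cos θ j and sin θ j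
  have hcj : ∀ j : Fin n, Real.cos (θ j) =
      Real.cos (θ k) * Real.cos (θ k - θ j) + Real.sin (θ k) * Real.sin (θ k - θ j) := by
    intro j
    have h := Real.cos_sub (θ k) (θ k - θ j)
    rw [show θ k - (θ k - θ j) = θ j by ring] at h
    exact h
  have hsj : ∀ j : Fin n, Real.sin (θ j) =
      Real.sin (θ k) * Real.cos (θ k - θ j) - Real.cos (θ k) * Real.sin (θ k - θ j) := by
    intro j
    have h := Real.sin_sub (θ k) (θ k - θ j)
    rw [show θ k - (θ k - θ j) = θ j by ring] at h
    exact h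
  have h0 : ∑ j ∈ Finset.univ.erase k,
      (2 - 2 * Real.cos (θ k - θ j))⁻¹ * (Real.cos (θ k) - Real.cos (θ j)) =
      ((n:ℝ) - 1) / 2 * Real.cos (θ k) := by
    have hterm : ∀ j ∈ Finset.univ.erase k,
        (2 - 2 * Real.cos (θ k - θ j))⁻¹ * (Real.cos (θ k) - Real.cos (θ j)) =
        Real.cos (θ k) * (1/2) - Real.sin (θ k) * f j := by
      intro j hj
      have hjk : j ≠ k := (Finset.mem_erase.mp hj).1
      have hD := hD0 j hjk
      have hD' : 1 - Real.cos (θ k - θ j) ≠ 0 := fun h => hD (by linarith)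
      rw [hcj j]
      simp only [hf]
      field_simp
      ring
    rw [Finset.sum_congr rfl hterm, Finset.sum_sub_distrib, ← Finset.mul_sum, ← Finset.mul_sum,
      hS, mul_zero, sub_zero, Finset.sum_const, hcard, nsmul_eq_mul]
    push_cast [Nat.cast_sub (by omega : 1 ≤ n)]
    ring
  have h1 : ∑ j ∈ Finset.univ.erase k,
      (2 - 2 * Real.cos (θ k - θ j))⁻¹ * (Real.sin (θ k) - Real.sin (θ j)) =
      ((n:ℝ) - 1) / 2 * Real.sin (θ k) := by
    have hterm : ∀ j ∈ Finset.univ.erase k,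
        (2 - 2 * Real.cos (θ k - θ j))⁻¹ * (Real.sin (θ k) - Real.sin (θ j)) =
        Real.sin (θ k) * (1/2) + Real.cos (θ k) * f j := by
      intro j hj
      have hjk : j ≠ k := (Finset.mem_erase.mp hj).1
      have hD := hD0 j hjk
      have hD' : 1 - Real.cos (θ k - θ j) ≠ 0 := fun h => hD (by linarith)
      rw [hsj j]
      simp only [hf]
      field_simp
      ring
    rw [Finset.sum_congr rfl hterm, Finset.sum_add_distrib, ← Finset.mul_sum, ← Finset.mul_sum,
      hS, mul_zero, add_zero, Finset.sum_const, hcard, nsmul_eq_mul]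
    push_cast [Nat.cast_sub (by omega : 1 ≤ n)]
    ring
  refine PiLp.ext fun i => ?_
  have happ : ∀ i : Fin 2, (∑ j ∈ Finset.univ.erase k,
      (‖w k - w j‖ ^ 2)⁻¹ • (w k - w j)) i =
      ∑ j ∈ Finset.univ.erase k, (‖w k - w j‖ ^ 2)⁻¹ * ((w k) i - (w j) i) := by
    intro i
    show (EuclideanSpace.projₗ i) (∑ j ∈ Finset.univ.erase k,
      (‖w k - w j‖ ^ 2)⁻¹ • (w k - w j)) = _
    rw [map_sum (EuclideanSpace.projₗ i)]
    exact Finset.sum_congr rfl fun j hj => by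
      simp [EuclideanSpace.projₗ, PiLp.projₗ, PiLp.smul_apply, PiLp.sub_apply, smul_eq_mul]
  rw [happ i, PiLp.smul_apply, smul_eq_mul]
  have hsum : ∀ i : Fin 2, ∑ j ∈ Finset.univ.erase k, (‖w k - w j‖ ^ 2)⁻¹ * ((w k) i - (w j) i)
      = ∑ j ∈ Finset.univ.erase k,
        (2 - 2 * Real.cos (θ k - θ j))⁻¹ * ((w k) i - (w j) i) := by
    intro i
    exact Finset.sum_congr rfl fun j hj => by rw [hnorm j]
  rw [hsum i]
  fin_cases i
  · have hwk : (w k) (0 : Fin 2) = Real.cos (θ k) := by rw [hw k]; rfl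
    have hwj : ∀ j : Fin n, (w j) (0 : Fin 2) = Real.cos (θ j) := fun j => by rw [hw j]; rfl
    simp only [Fin.mk_zero, Fin.mk_one, hwk, hwj]
    exact h0.symm
  · have hwk : (w k) (1 : Fin 2) = Real.sin (θ k) := by rw [hw k]; rfl
    have hwj : ∀ j : Fin n, (w j) (1 : Fin 2) = Real.sin (θ j) := fun j => by rw [hw j]; rfl
    simp only [Fin.mk_zero, Fin.mk_one, hwk, hwj]
    exact h1.symm
end

section
/- The configuration of two orthogonal equilateral triangles in $\mathbb{R}^4$ (six points: three forming an equilateral triangle in the plane spanned by $e_1, e_2$ and three forming an equilateral triangle in the plane spanned by $e_3, e_4$) has Gram matrix with $X_{ij} = -1/2$ within each triangle and $X_{ij} = 0$ across triangles, and satisfies the polynomial system for critical configurations of the logarithmic Fekete problem with $6$ points. -/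
open Finset Matrix Real

/-- Six points in `ℝ⁴`: an equilateral triangle in the plane spanned by `e₁, e₂`,
and an equilateral triangle in the plane spanned by `e₃, e₄`. -/
noncomputable def twoTriangles : Fin 6 → EuclideanSpace ℝ (Fin 4) := fun k =>
  if _h : (k : ℕ) < 3 then
    (WithLp.equiv 2 (Fin 4 → ℝ)).symm
      ![Real.cos (2 * π * k / 3), Real.sin (2 * π * k / 3), 0, 0]
  else
    (WithLp.equiv 2 (Fin 4 → ℝ)).symm
      ![0, 0, Real.cos (2 * π * ((k : ℕ) - 3) / 3), Real.sin (2 * π * ((k : ℕ) - 3) / 3)]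

/-- The Gram matrix: `-1/2` within each triangle, `0` across triangles. -/
noncomputable def twoTrianglesGram : Matrix (Fin 6) (Fin 6) ℝ := fun i j =>
  if i = j then 1
  else if ((i : ℕ) < 3 ∧ (j : ℕ) < 3) ∨ (3 ≤ (i : ℕ) ∧ 3 ≤ (j : ℕ)) then -1/2
  else 0

lemma cos23 : Real.cos (2*π/3) = -(1/2) := by
  rw [show (2*π/3 : ℝ) = π - π/3 by ring, Real.cos_pi_sub, Real.cos_pi_div_three]

lemma sin23 : Real.sin (2*π/3) = Real.sqrt 3 / 2 := by
  rw [show (2*π/3 : ℝ) = π - π/3 by ring, Real.sin_pi_sub, Real.sin_pi_div_three]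

lemma cos43 : Real.cos (2*π*2/3) = -(1/2) := by
  rw [show (2*π*2/3 : ℝ) = π/3 + π by ring, Real.cos_add_pi, Real.cos_pi_div_three]

lemma sin43 : Real.sin (2*π*2/3) = -(Real.sqrt 3 / 2) := by
  rw [show (2*π*2/3 : ℝ) = π/3 + π by ring, Real.sin_add_pi, Real.sin_pi_div_three]

lemma sq3 : Real.sqrt 3 * Real.sqrt 3 = 3 :=
  Real.mul_self_sqrt (by norm_num)

lemma v3 : ((3:Fin 6):ℕ) = 3 := rfl
lemma v4 : ((4:Fin 6):ℕ) = 4 := rfl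
lemma v5 : ((5:Fin 6):ℕ) = 5 := rfl

set_option maxHeartbeats 2000000 in
theorem two_triangles_is_critical :
    (∀ i j, (inner ℝ (twoTriangles i) (twoTriangles j) : ℝ) = twoTrianglesGram i j) ∧
    FeketeSystem 6 twoTrianglesGram := by
  constructor
  · intro i j
    fin_cases i <;> fin_cases j <;>
      norm_num [twoTriangles, twoTrianglesGram, PiLp.inner_apply, Fin.sum_univ_four,
        cos23, sin23, cos43, sin43, Fin.ext_iff, Matrix.cons_val_two, Matrix.cons_val_three,
          Matrix.vecHead, Matrix.vecTail, -inner_self_eq_norm_sq_to_K] <;>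
      nlinarith [sq3, Real.sin_sq_add_cos_sq (2*π/3), Real.sin_sq_add_cos_sq (2*π*2/3)]
  · refine ⟨?_, ?_, ?_, ?_, ?_⟩
    · show twoTrianglesGramᵀ = twoTrianglesGram
      ext i j
      simp only [Matrix.transpose_apply, twoTrianglesGram]
      by_cases h : i = j
      · subst h; rfl
      · rw [if_neg h, if_neg (Ne.symm h)]
        have hiff : (((j:ℕ) < 3 ∧ (i:ℕ) < 3) ∨ (3 ≤ (j:ℕ) ∧ 3 ≤ (i:ℕ))) ↔
            (((i:ℕ) < 3 ∧ (j:ℕ) < 3) ∨ (3 ≤ (i:ℕ) ∧ 3 ≤ (j:ℕ))) := by tauto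
        rw [if_congr hiff rfl rfl]
    · intro i; simp [twoTrianglesGram]
    · intro i j h
      fin_cases i <;> fin_cases j <;> norm_num [twoTrianglesGram, Fin.ext_iff] at *
    · intro j
      rw [Finset.sum_erase_eq_sub (Finset.mem_univ j)]
      fin_cases j <;> norm_num [twoTrianglesGram, Fin.sum_univ_six, Fin.ext_iff, v3, v4, v5]
    · intro i k h
      rw [Finset.sum_erase_eq_sub (Finset.mem_univ k)]
      fin_cases i <;> fin_cases k <;>
        norm_num [twoTrianglesGram, Fin.sum_univ_six, Fin.ext_iff, v3, v4, v5] at *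
end

section
/- Two parallel equilateral triangles in phase on $S^2$, at heights $z = \pm z_0$, satisfy the critical configuration equations for the logarithmic Fekete problem with $6$ points if $z_0^2 = \frac{-3 + 2\sqrt{6}}{5}$. -/
set_option maxHeartbeats 1000000


open Finset Real

theorem three_three_points_critical (z0 : ℝ)
    (hz0 : z0 ^ 2 = (-3 + 2 * Real.sqrt 6) / 5) (hz0pos : 0 < z0) (hz0lt : z0 < 1)
    (R : ℝ) (hR : R = Real.sqrt (1 - z0 ^ 2))
    (w : Fin 6 → EuclideanSpace ℝ (Fin 3))
    (hw : ∀ k : Fin 6, w k = (WithLp.equiv 2 (Fin 3 → ℝ)).symm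
      (if (k : ℕ) < 3 then
        ![R * Real.cos (2 * π * k / 3), R * Real.sin (2 * π * k / 3), -z0]
      else
        ![R * Real.cos (2 * π * ((k : ℕ) - 3) / 3),
          R * Real.sin (2 * π * ((k : ℕ) - 3) / 3), z0])) :
    ∀ k, (5 / 2 : ℝ) • w k =
      ∑ j ∈ Finset.univ.erase k, (‖w k - w j‖ ^ 2)⁻¹ • (w k - w j) := by
  have c1 : Real.cos (2 * π * 1 / 3) = -(1/2) := by
    rw [show (2 * π * 1 / 3 : ℝ) = π - π/3 by ring, Real.cos_pi_sub, Real.cos_pi_div_three]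
  have s1 : Real.sin (2 * π * 1 / 3) = Real.sqrt 3 / 2 := by
    rw [show (2 * π * 1 / 3 : ℝ) = π - π/3 by ring, Real.sin_pi_sub, Real.sin_pi_div_three]
  have c2 : Real.cos (2 * π * 2 / 3) = -(1/2) := by
    rw [show (2 * π * 2 / 3 : ℝ) = π + π/3 by ring, Real.cos_add, Real.cos_pi, Real.sin_pi,
      Real.cos_pi_div_three]; ring
  have s2 : Real.sin (2 * π * 2 / 3) = -(Real.sqrt 3 / 2) := by
    rw [show (2 * π * 2 / 3 : ℝ) = π + π/3 by ring, Real.sin_add, Real.cos_pi, Real.sin_pi,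
      Real.sin_pi_div_three]; ring
  have hw0 : ∀ i, w 0 i = ![R, 0, -z0] i := by
    intro i
    rw [hw, if_pos (show ((0:Fin 6):ℕ) < 3 by norm_num)]
    simp only [WithLp.equiv_symm_apply, PiLp.toLp_apply, show ((((0:Fin 6):ℕ)):ℝ) = 0 from by norm_num]
    norm_num
  have hw1 : ∀ i, w 1 i = ![-(R/2), R * Real.sqrt 3 / 2, -z0] i := by
    intro i
    rw [hw, if_pos (show ((1:Fin 6):ℕ) < 3 by norm_num)]
    simp only [WithLp.equiv_symm_apply, PiLp.toLp_apply,
      show ((((1:Fin 6):ℕ)):ℝ) = 1 from by norm_num, c1, s1]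
    fin_cases i <;> simp <;> ring
  have hw2 : ∀ i, w 2 i = ![-(R/2), -(R * Real.sqrt 3 / 2), -z0] i := by
    intro i
    rw [hw, if_pos (show ((2:Fin 6):ℕ) < 3 by norm_num)]
    simp only [WithLp.equiv_symm_apply, PiLp.toLp_apply,
      show ((((2:Fin 6):ℕ)):ℝ) = 2 from by norm_num, c2, s2]
    fin_cases i <;> simp <;> ring
  have hw3 : ∀ i, w 3 i = ![R, 0, z0] i := by
    intro i
    rw [hw, if_neg (show ¬ ((3:Fin 6):ℕ) < 3 by decide)]
    simp only [WithLp.equiv_symm_apply, PiLp.toLp_apply,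
      show ((((3:Fin 6):ℕ)):ℝ) = 3 from by norm_num [show ((3:Fin 6):ℕ) = 3 from rfl], show ((3:ℝ) - 3) = 0 from by norm_num]
    norm_num
  have hw4 : ∀ i, w 4 i = ![-(R/2), R * Real.sqrt 3 / 2, z0] i := by
    intro i
    rw [hw, if_neg (show ¬ ((4:Fin 6):ℕ) < 3 by decide)]
    simp only [WithLp.equiv_symm_apply, PiLp.toLp_apply,
      show ((((4:Fin 6):ℕ)):ℝ) = 4 from by norm_num [show ((4:Fin 6):ℕ) = 4 from rfl], show ((4:ℝ) - 3) = 1 from by norm_num, c1, s1]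
    fin_cases i <;> simp <;> ring
  have hw5 : ∀ i, w 5 i = ![-(R/2), -(R * Real.sqrt 3 / 2), z0] i := by
    intro i
    rw [hw, if_neg (show ¬ ((5:Fin 6):ℕ) < 3 by decide)]
    simp only [WithLp.equiv_symm_apply, PiLp.toLp_apply,
      show ((((5:Fin 6):ℕ)):ℝ) = 5 from by norm_num [show ((5:Fin 6):ℕ) = 5 from rfl], show ((5:ℝ) - 3) = 2 from by norm_num, c2, s2]
    fin_cases i <;> simp <;> ring
  have s6sq : Real.sqrt 6 ^ 2 = 6 := Real.sq_sqrt (by norm_num)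
  have s3sq : Real.sqrt 3 ^ 2 = 3 := Real.sq_sqrt (by norm_num)
  have hz2 : z0 ^ 2 < 1 := by nlinarith
  have hR2 : R ^ 2 = 1 - z0 ^ 2 := by rw [hR]; exact Real.sq_sqrt (by nlinarith)
  have hRpos : 0 < R := by rw [hR]; exact Real.sqrt_pos.mpr (by nlinarith)
  have hq : 5 * z0 ^ 2 * z0 ^ 2 + 6 * z0 ^ 2 - 3 = 0 := by
    linear_combination (5 * (z0 ^ 2 - (-3 - 2 * Real.sqrt 6) / 5)) * hz0 + (4/5) * s6sq
  have hz0ne : z0 ≠ 0 := ne_of_gt hz0pos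
  have hRne : R ≠ 0 := ne_of_gt hRpos
  have h1ne : 1 - z0 ^ 2 ≠ 0 := by nlinarith
  have h3ne : (3:ℝ) + z0 ^ 2 ≠ 0 := by positivity
  have keyA : (3 * (1 - z0 ^ 2))⁻¹ * 3 + 3 * ((3:ℝ) + z0 ^ 2)⁻¹ = 5 / 2 := by
    field_simp
    linear_combination hq
  have keyB : (2 * z0 ^ 2)⁻¹ + 4 * ((3:ℝ) + z0 ^ 2)⁻¹ = 5 / 2 := by
    field_simp
    linear_combination (-1) * hq
  have normsq : ∀ x : EuclideanSpace ℝ (Fin 3), ‖x‖ ^ 2 = x 0 ^ 2 + x 1 ^ 2 + x 2 ^ 2 := by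
    intro x
    rw [EuclideanSpace.norm_eq, Real.sq_sqrt (by positivity)]
    simp [Fin.sum_univ_three, sq_abs]
  have n01 : ‖w 0 - w 1‖ ^ 2 = 3*(1 - z0^2) := by
    rw [normsq]
    simp only [PiLp.sub_apply, hw0, hw1]
    norm_num [Matrix.cons_val_two]
    linear_combination (R^2/4) * s3sq + 3 * hR2
  have n02 : ‖w 0 - w 2‖ ^ 2 = 3*(1 - z0^2) := by
    rw [normsq]
    simp only [PiLp.sub_apply, hw0, hw2]
    norm_num [Matrix.cons_val_two]
    linear_combination (R^2/4) * s3sq + 3 * hR2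
  have n03 : ‖w 0 - w 3‖ ^ 2 = 4*z0^2 := by
    rw [normsq]
    simp only [PiLp.sub_apply, hw0, hw3]
    norm_num [Matrix.cons_val_two]
    ring
  have n04 : ‖w 0 - w 4‖ ^ 2 = 3 + z0^2 := by
    rw [normsq]
    simp only [PiLp.sub_apply, hw0, hw4]
    norm_num [Matrix.cons_val_two]
    linear_combination (R^2/4) * s3sq + 3 * hR2
  have n05 : ‖w 0 - w 5‖ ^ 2 = 3 + z0^2 := by
    rw [normsq]
    simp only [PiLp.sub_apply, hw0, hw5]
    norm_num [Matrix.cons_val_two]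
    linear_combination (R^2/4) * s3sq + 3 * hR2
  have n10 : ‖w 1 - w 0‖ ^ 2 = 3*(1 - z0^2) := by
    rw [normsq]
    simp only [PiLp.sub_apply, hw1, hw0]
    norm_num [Matrix.cons_val_two]
    linear_combination (R^2/4) * s3sq + 3 * hR2
  have n12 : ‖w 1 - w 2‖ ^ 2 = 3*(1 - z0^2) := by
    rw [normsq]
    simp only [PiLp.sub_apply, hw1, hw2]
    norm_num [Matrix.cons_val_two]
    linear_combination (R^2) * s3sq + 3 * hR2
  have n13 : ‖w 1 - w 3‖ ^ 2 = 3 + z0^2 := by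
    rw [normsq]
    simp only [PiLp.sub_apply, hw1, hw3]
    norm_num [Matrix.cons_val_two]
    linear_combination (R^2/4) * s3sq + 3 * hR2
  have n14 : ‖w 1 - w 4‖ ^ 2 = 4*z0^2 := by
    rw [normsq]
    simp only [PiLp.sub_apply, hw1, hw4]
    norm_num [Matrix.cons_val_two]
    ring
  have n15 : ‖w 1 - w 5‖ ^ 2 = 3 + z0^2 := by
    rw [normsq]
    simp only [PiLp.sub_apply, hw1, hw5]
    norm_num [Matrix.cons_val_two]
    linear_combination (R^2) * s3sq + 3 * hR2
  have n20 : ‖w 2 - w 0‖ ^ 2 = 3*(1 - z0^2) := by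
    rw [normsq]
    simp only [PiLp.sub_apply, hw2, hw0]
    norm_num [Matrix.cons_val_two]
    linear_combination (R^2/4) * s3sq + 3 * hR2
  have n21 : ‖w 2 - w 1‖ ^ 2 = 3*(1 - z0^2) := by
    rw [normsq]
    simp only [PiLp.sub_apply, hw2, hw1]
    norm_num [Matrix.cons_val_two]
    linear_combination (R^2) * s3sq + 3 * hR2
  have n23 : ‖w 2 - w 3‖ ^ 2 = 3 + z0^2 := by
    rw [normsq]
    simp only [PiLp.sub_apply, hw2, hw3]
    norm_num [Matrix.cons_val_two]
    linear_combination (R^2/4) * s3sq + 3 * hR2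
  have n24 : ‖w 2 - w 4‖ ^ 2 = 3 + z0^2 := by
    rw [normsq]
    simp only [PiLp.sub_apply, hw2, hw4]
    norm_num [Matrix.cons_val_two]
    linear_combination (R^2) * s3sq + 3 * hR2
  have n25 : ‖w 2 - w 5‖ ^ 2 = 4*z0^2 := by
    rw [normsq]
    simp only [PiLp.sub_apply, hw2, hw5]
    norm_num [Matrix.cons_val_two]
    ring
  have n30 : ‖w 3 - w 0‖ ^ 2 = 4*z0^2 := by
    rw [normsq]
    simp only [PiLp.sub_apply, hw3, hw0]
    norm_num [Matrix.cons_val_two]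
    ring
  have n31 : ‖w 3 - w 1‖ ^ 2 = 3 + z0^2 := by
    rw [normsq]
    simp only [PiLp.sub_apply, hw3, hw1]
    norm_num [Matrix.cons_val_two]
    linear_combination (R^2/4) * s3sq + 3 * hR2
  have n32 : ‖w 3 - w 2‖ ^ 2 = 3 + z0^2 := by
    rw [normsq]
    simp only [PiLp.sub_apply, hw3, hw2]
    norm_num [Matrix.cons_val_two]
    linear_combination (R^2/4) * s3sq + 3 * hR2
  have n34 : ‖w 3 - w 4‖ ^ 2 = 3*(1 - z0^2) := by
    rw [normsq]
    simp only [PiLp.sub_apply, hw3, hw4]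
    norm_num [Matrix.cons_val_two]
    linear_combination (R^2/4) * s3sq + 3 * hR2
  have n35 : ‖w 3 - w 5‖ ^ 2 = 3*(1 - z0^2) := by
    rw [normsq]
    simp only [PiLp.sub_apply, hw3, hw5]
    norm_num [Matrix.cons_val_two]
    linear_combination (R^2/4) * s3sq + 3 * hR2
  have n40 : ‖w 4 - w 0‖ ^ 2 = 3 + z0^2 := by
    rw [normsq]
    simp only [PiLp.sub_apply, hw4, hw0]
    norm_num [Matrix.cons_val_two]
    linear_combination (R^2/4) * s3sq + 3 * hR2
  have n41 : ‖w 4 - w 1‖ ^ 2 = 4*z0^2 := by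
    rw [normsq]
    simp only [PiLp.sub_apply, hw4, hw1]
    norm_num [Matrix.cons_val_two]
    ring
  have n42 : ‖w 4 - w 2‖ ^ 2 = 3 + z0^2 := by
    rw [normsq]
    simp only [PiLp.sub_apply, hw4, hw2]
    norm_num [Matrix.cons_val_two]
    linear_combination (R^2) * s3sq + 3 * hR2
  have n43 : ‖w 4 - w 3‖ ^ 2 = 3*(1 - z0^2) := by
    rw [normsq]
    simp only [PiLp.sub_apply, hw4, hw3]
    norm_num [Matrix.cons_val_two]
    linear_combination (R^2/4) * s3sq + 3 * hR2
  have n45 : ‖w 4 - w 5‖ ^ 2 = 3*(1 - z0^2) := by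
    rw [normsq]
    simp only [PiLp.sub_apply, hw4, hw5]
    norm_num [Matrix.cons_val_two]
    linear_combination (R^2) * s3sq + 3 * hR2
  have n50 : ‖w 5 - w 0‖ ^ 2 = 3 + z0^2 := by
    rw [normsq]
    simp only [PiLp.sub_apply, hw5, hw0]
    norm_num [Matrix.cons_val_two]
    linear_combination (R^2/4) * s3sq + 3 * hR2
  have n51 : ‖w 5 - w 1‖ ^ 2 = 3 + z0^2 := by
    rw [normsq]
    simp only [PiLp.sub_apply, hw5, hw1]
    norm_num [Matrix.cons_val_two]
    linear_combination (R^2) * s3sq + 3 * hR2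
  have n52 : ‖w 5 - w 2‖ ^ 2 = 4*z0^2 := by
    rw [normsq]
    simp only [PiLp.sub_apply, hw5, hw2]
    norm_num [Matrix.cons_val_two]
    ring
  have n53 : ‖w 5 - w 3‖ ^ 2 = 3*(1 - z0^2) := by
    rw [normsq]
    simp only [PiLp.sub_apply, hw5, hw3]
    norm_num [Matrix.cons_val_two]
    linear_combination (R^2/4) * s3sq + 3 * hR2
  have n54 : ‖w 5 - w 4‖ ^ 2 = 3*(1 - z0^2) := by
    rw [normsq]
    simp only [PiLp.sub_apply, hw5, hw4]
    norm_num [Matrix.cons_val_two]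
    linear_combination (R^2) * s3sq + 3 * hR2
  intro k
  fin_cases k
  · show (5 / 2 : ℝ) • w 0 = ∑ j ∈ Finset.univ.erase 0, (‖w 0 - w j‖ ^ 2)⁻¹ • (w 0 - w j)
    rw [Finset.sum_erase _ (by simp), Fin.sum_univ_six]
    refine PiLp.ext fun i => ?_
    simp only [PiLp.smul_apply, PiLp.add_apply, PiLp.sub_apply, smul_eq_mul, n01, n02, n03, n04, n05]
    fin_cases i <;>
      simp [hw0, hw1, hw2, hw3, hw4, hw5, -one_div] <;> field_simp
    · linear_combination (-3:ℝ) * hq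
    · linear_combination (-4:ℝ) * hq
  · show (5 / 2 : ℝ) • w 1 = ∑ j ∈ Finset.univ.erase 1, (‖w 1 - w j‖ ^ 2)⁻¹ • (w 1 - w j)
    rw [Finset.sum_erase _ (by simp), Fin.sum_univ_six]
    refine PiLp.ext fun i => ?_
    simp only [PiLp.smul_apply, PiLp.add_apply, PiLp.sub_apply, smul_eq_mul, n10, n12, n13, n14, n15]
    fin_cases i <;>
      simp [hw0, hw1, hw2, hw3, hw4, hw5, -one_div] <;> field_simp
    · linear_combination (3:ℝ) * hq
    · linear_combination (-3:ℝ) * hq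
    · linear_combination (-4:ℝ) * hq
  · show (5 / 2 : ℝ) • w 2 = ∑ j ∈ Finset.univ.erase 2, (‖w 2 - w j‖ ^ 2)⁻¹ • (w 2 - w j)
    rw [Finset.sum_erase _ (by simp), Fin.sum_univ_six]
    refine PiLp.ext fun i => ?_
    simp only [PiLp.smul_apply, PiLp.add_apply, PiLp.sub_apply, smul_eq_mul, n20, n21, n23, n24, n25]
    fin_cases i <;>
      simp [hw0, hw1, hw2, hw3, hw4, hw5, -one_div] <;> field_simp
    · linear_combination (3:ℝ) * hq
    · linear_combination (3:ℝ) * hq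
    · linear_combination (-4:ℝ) * hq
  · show (5 / 2 : ℝ) • w 3 = ∑ j ∈ Finset.univ.erase 3, (‖w 3 - w j‖ ^ 2)⁻¹ • (w 3 - w j)
    rw [Finset.sum_erase _ (by simp), Fin.sum_univ_six]
    refine PiLp.ext fun i => ?_
    simp only [PiLp.smul_apply, PiLp.add_apply, PiLp.sub_apply, smul_eq_mul, n30, n31, n32, n34, n35]
    fin_cases i <;>
      simp [hw0, hw1, hw2, hw3, hw4, hw5, -one_div] <;> field_simp
    · linear_combination (-3:ℝ) * hq
    · linear_combination (4:ℝ) * hq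
  · show (5 / 2 : ℝ) • w 4 = ∑ j ∈ Finset.univ.erase 4, (‖w 4 - w j‖ ^ 2)⁻¹ • (w 4 - w j)
    rw [Finset.sum_erase _ (by simp), Fin.sum_univ_six]
    refine PiLp.ext fun i => ?_
    simp only [PiLp.smul_apply, PiLp.add_apply, PiLp.sub_apply, smul_eq_mul, n40, n41, n42, n43, n45]
    fin_cases i <;>
      simp [hw0, hw1, hw2, hw3, hw4, hw5, -one_div] <;> field_simp
    · linear_combination (3:ℝ) * hq
    · linear_combination (-3:ℝ) * hq
    · linear_combination (4:ℝ) * hq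
  · show (5 / 2 : ℝ) • w 5 = ∑ j ∈ Finset.univ.erase 5, (‖w 5 - w j‖ ^ 2)⁻¹ • (w 5 - w j)
    rw [Finset.sum_erase _ (by simp), Fin.sum_univ_six]
    refine PiLp.ext fun i => ?_
    simp only [PiLp.smul_apply, PiLp.add_apply, PiLp.sub_apply, smul_eq_mul, n50, n51, n52, n53, n54]
    fin_cases i <;>
      simp [hw0, hw1, hw2, hw3, hw4, hw5, -one_div] <;> field_simp
    · linear_combination (3:ℝ) * hq
    · linear_combination (3:ℝ) * hq
    · linear_combination (4:ℝ) * hq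
end
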